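/- Let a ≥ b > 0 and set k = a/√(a² + b²). Then ∫₀^{ab/√(a²+b²)} a²b²(a² − b²) / √((a² + b²)² x⁴ − 2a²b²(a² − b²) x² + a⁴b⁴) dx = (ab(a² − b²)/(2√(a² + b²)))·K(k), where K(k) = ∫₀^{π/2} dθ/√(1 − k² sin²θ). -/

import Mathlib

open Real

set_option maxHeartbeats 1000000

/-- Complete elliptic integral of the first kind. -/
noncomputable def ellipticK (k : ℝ) : ℝ :=
  ∫ θ in (0:ℝ)..(π / 2), 1 / Real.sqrt (1 - k ^ 2 * Real.sin θ ^ 2)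

/-- Evaluation of the elliptic integral `𝓔₂` (up to sign) arising in the
computation of the limit hyperbolic excess. -/
theorem excess_integral_E2 (a b : ℝ) (hb : 0 < b) (hab : b ≤ a)
    (k : ℝ) (hk : k = a / Real.sqrt (a ^ 2 + b ^ 2)) :
    ∫ x in (0:ℝ)..(a * b / Real.sqrt (a ^ 2 + b ^ 2)),
        a ^ 2 * b ^ 2 * (a ^ 2 - b ^ 2) /
          Real.sqrt ((a ^ 2 + b ^ 2) ^ 2 * x ^ 4
            - 2 * a ^ 2 * b ^ 2 * (a ^ 2 - b ^ 2) * x ^ 2 + a ^ 4 * b ^ 4)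
      = a * b * (a ^ 2 - b ^ 2) / (2 * Real.sqrt (a ^ 2 + b ^ 2)) * ellipticK k := by
  have ha : 0 < a := lt_of_lt_of_le hb hab
  have hab2 : (0:ℝ) < a ^ 2 + b ^ 2 := by positivity
  set c := Real.sqrt (a ^ 2 + b ^ 2) with hcdef
  have hcpos : 0 < c := Real.sqrt_pos.mpr hab2
  have hc2 : c ^ 2 = a ^ 2 + b ^ 2 := Real.sq_sqrt hab2.le
  have hk2 : k ^ 2 = a ^ 2 / (a ^ 2 + b ^ 2) := by rw [hk, div_pow, hc2]
  -- positivity of the quartic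
  have hQ : ∀ x : ℝ, 0 < (a ^ 2 + b ^ 2) ^ 2 * x ^ 4
      - 2 * a ^ 2 * b ^ 2 * (a ^ 2 - b ^ 2) * x ^ 2 + a ^ 4 * b ^ 4 := by
    intro x
    have h : (a ^ 2 + b ^ 2) ^ 2 * x ^ 4
        - 2 * a ^ 2 * b ^ 2 * (a ^ 2 - b ^ 2) * x ^ 2 + a ^ 4 * b ^ 4
        = ((a ^ 2 + b ^ 2) * x ^ 2 - a ^ 2 * b ^ 2) ^ 2 + (2 * a * b ^ 2 * x) ^ 2 := by
      ring
    rw [h]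
    rcases eq_or_ne x 0 with h0 | h0
    · rw [h0]
      have : (0:ℝ) < (a ^ 2 * b ^ 2) ^ 2 := by positivity
      nlinarith [sq_nonneg ((a ^ 2 + b ^ 2) * (0:ℝ) ^ 2 - a ^ 2 * b ^ 2)]
    · have h1 : (0:ℝ) < (2 * a * b ^ 2 * x) ^ 2 := by positivity
      nlinarith [sq_nonneg ((a ^ 2 + b ^ 2) * x ^ 2 - a ^ 2 * b ^ 2)]
  set f : ℝ → ℝ := fun x => a ^ 2 * b ^ 2 * (a ^ 2 - b ^ 2) /
      Real.sqrt ((a ^ 2 + b ^ 2) ^ 2 * x ^ 4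
        - 2 * a ^ 2 * b ^ 2 * (a ^ 2 - b ^ 2) * x ^ 2 + a ^ 4 * b ^ 4) with hf
  have hfc : Continuous f := by
    apply Continuous.div continuous_const
    · exact Real.continuous_sqrt.comp (by continuity)
    · intro x; exact ne_of_gt (Real.sqrt_pos.mpr (hQ x))
  set g : ℝ → ℝ := fun θ => a * b / c * Real.tan (θ / 2) with hg
  set g' : ℝ → ℝ := fun θ => a * b / c * (1 / Real.cos (θ / 2) ^ 2 * (1 / 2)) with hg'
  have hpi2 : (0:ℝ) ≤ π / 2 := by positivity
  have hcos : ∀ θ ∈ Set.uIcc (0:ℝ) (π / 2), 0 < Real.cos (θ / 2) := by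
    intro θ hθ
    rw [Set.uIcc_of_le hpi2] at hθ
    have hpi := Real.pi_pos
    apply Real.cos_pos_of_mem_Ioo
    constructor
    · have := hθ.1; linarith
    · have := hθ.2; linarith
  have hderiv : ∀ θ ∈ Set.uIcc (0:ℝ) (π / 2), HasDerivAt g (g' θ) θ := by
    intro θ hθ
    have h1 : HasDerivAt (fun x : ℝ => x / 2) (1 / 2) θ := (hasDerivAt_id θ).div_const 2
    have h2 : HasDerivAt Real.tan (1 / Real.cos (θ / 2) ^ 2) (θ / 2) :=
      Real.hasDerivAt_tan (ne_of_gt (hcos θ hθ))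
    exact ((h2.comp θ h1).const_mul (a * b / c))
  have hcont' : ContinuousOn g' (Set.uIcc (0:ℝ) (π / 2)) := by
    apply ContinuousOn.mul continuousOn_const
    apply ContinuousOn.mul _ continuousOn_const
    apply ContinuousOn.div continuousOn_const
    · exact ((Real.continuous_cos.comp (continuous_id.div_const 2)).pow 2).continuousOn
    · intro θ hθ
      exact pow_ne_zero 2 (ne_of_gt (hcos θ hθ))
  have hsub := intervalIntegral.integral_comp_smul_deriv hderiv hcont' hfc
  have hg0 : g 0 = 0 := by simp [hg]
  have hgpi : g (π / 2) = a * b / c := by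
    simp only [hg]
    rw [show (π / 2) / 2 = π / 4 by ring, Real.tan_pi_div_four, mul_one]
  rw [hg0, hgpi] at hsub
  rw [← hsub]
  rw [ellipticK, ← intervalIntegral.integral_const_mul]
  apply intervalIntegral.integral_congr
  intro θ hθ
  have hco : 0 < Real.cos (θ / 2) := hcos θ hθ
  have hcne : Real.cos (θ / 2) ≠ 0 := hco.ne'
  have hpy : Real.sin (θ / 2) ^ 2 + Real.cos (θ / 2) ^ 2 = 1 := Real.sin_sq_add_cos_sq _
  have hsin : Real.sin θ = 2 * Real.sin (θ / 2) * Real.cos (θ / 2) := by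
    have h := Real.sin_two_mul (θ / 2)
    rw [show 2 * (θ / 2) = θ by ring] at h
    exact h
  have hsin2 : Real.sin θ ^ 2 = 4 * (1 - Real.cos (θ / 2) ^ 2) * Real.cos (θ / 2) ^ 2 := by
    rw [hsin]; linear_combination (4 * Real.cos (θ / 2) ^ 2) * hpy
  have hk1 : k ^ 2 < 1 := by
    rw [hk2, div_lt_one hab2]; nlinarith
  have hs1 : Real.sin θ ^ 2 ≤ 1 := Real.sin_sq_le_one θ
  have hsubpos : 0 < 1 - k ^ 2 * Real.sin θ ^ 2 := by nlinarith [sq_nonneg k, sq_nonneg (Real.sin θ)]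
  have hg2 : (g θ) ^ 2 = a ^ 2 * b ^ 2 * (1 - Real.cos (θ / 2) ^ 2)
      / ((a ^ 2 + b ^ 2) * Real.cos (θ / 2) ^ 2) := by
    simp only [hg]
    rw [Real.tan_eq_sin_div_cos]
    have h : (a * b / c * (Real.sin (θ / 2) / Real.cos (θ / 2))) ^ 2
        = a ^ 2 * b ^ 2 * Real.sin (θ / 2) ^ 2 / (c ^ 2 * Real.cos (θ / 2) ^ 2) := by
      field_simp
    rw [h, hc2]
    congr 1
    linear_combination (a ^ 2 * b ^ 2) * hpy
  have hQval : (a ^ 2 + b ^ 2) ^ 2 * (g θ) ^ 4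
      - 2 * a ^ 2 * b ^ 2 * (a ^ 2 - b ^ 2) * (g θ) ^ 2 + a ^ 4 * b ^ 4
      = (a ^ 2 * b ^ 2 / Real.cos (θ / 2) ^ 2) ^ 2 * (1 - k ^ 2 * Real.sin θ ^ 2) := by
    have h4 : (g θ) ^ 4 = ((g θ) ^ 2) ^ 2 := by ring
    rw [h4, hg2, hsin2, hk2]
    field_simp
    ring
  have hsqrt : Real.sqrt ((a ^ 2 + b ^ 2) ^ 2 * (g θ) ^ 4
      - 2 * a ^ 2 * b ^ 2 * (a ^ 2 - b ^ 2) * (g θ) ^ 2 + a ^ 4 * b ^ 4)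
      = a ^ 2 * b ^ 2 / Real.cos (θ / 2) ^ 2 * Real.sqrt (1 - k ^ 2 * Real.sin θ ^ 2) := by
    rw [hQval, Real.sqrt_mul (sq_nonneg _), Real.sqrt_sq (by positivity)]
  show g' θ • f (g θ)
      = a * b * (a ^ 2 - b ^ 2) / (2 * c) * (1 / Real.sqrt (1 - k ^ 2 * Real.sin θ ^ 2))
  simp only [hg', hf, smul_eq_mul]
  rw [hsqrt]
  have hsq : 0 < Real.sqrt (1 - k ^ 2 * Real.sin θ ^ 2) := Real.sqrt_pos.mpr hsubpos
  field_simp
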